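/- Define constants L̄ = (N-1) max over t < T, k < N, ω of (1 - P_t^k(ω)) P_t^k(ω) and L = (1/2)(N-1)^{-1} min over t < T, k ≤ N, ω of P_t^k(ω). Then for every t and every F_t-measurable Z_t ∈ R^{K×N}, L · E[‖Z_t Ĩ‖^2] ≤ E[|Z_t M_{t+1}|^2] ≤ L̄ · E[‖Z_t Ĩ‖^2], where Ĩ = (I_{(N-1)×(N-1)}, -1_{N-1})^*. -/

import Mathlib

open Finset Matrix

section Setup

variable {Ω : Type*} [Fintype Ω] [DecidableEq Ω] {N : ℕ}

/-- A probability on a finite sample space with everywhere-positive weights. -/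
structure FinProb (Ω : Type*) [Fintype Ω] where
  p : Ω → ℝ
  pos : ∀ ω, 0 < p ω
  sum_one : ∑ ω, p ω = 1

/-- `ω` and `ω'` share the same `W`-path up to time `t` (the atoms of `F_t`). -/
def samePath (W : ℕ → Ω → Fin N) (t : ℕ) (ω ω' : Ω) : Prop :=
  ∀ s ∈ Finset.range (t + 1), W s ω = W s ω'

instance (W : ℕ → Ω → Fin N) (t : ℕ) (ω ω' : Ω) : Decidable (samePath W t ω ω') := by
  unfold samePath; infer_instance

/-- `F_t`-measurability: `f` is constant on the atoms of `F_t`. -/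
def measF (W : ℕ → Ω → Fin N) (t : ℕ) {α : Type*} (f : Ω → α) : Prop :=
  ∀ ω ω', samePath W t ω ω' → f ω = f ω'

/-- Conditional expectation given `F_t`. -/
noncomputable def cexp (P : FinProb Ω) (W : ℕ → Ω → Fin N) (t : ℕ)
    {E : Type*} [AddCommGroup E] [Module ℝ E] (Y : Ω → E) (ω : Ω) : E :=
  (∑ ω' ∈ univ.filter (fun ω' => samePath W t ω ω'), P.p ω')⁻¹ •
    ∑ ω' ∈ univ.filter (fun ω' => samePath W t ω ω'), P.p ω' • Y ω'

/-- The basis-vector valued process `W_t ∈ {e_1,…,e_N} ⊆ ℝ^N`. -/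
def wvec (W : ℕ → Ω → Fin N) (t : ℕ) (ω : Ω) : Fin N → ℝ :=
  fun j => if W t ω = j then 1 else 0

/-- `M_{t+1} = W_{t+1} - E[W_{t+1} | F_t]` (indexed so that `Mdiff P W t` is `M_{t+1}`). -/
noncomputable def Mdiff (P : FinProb Ω) (W : ℕ → Ω → Fin N) (t : ℕ) (ω : Ω) : Fin N → ℝ :=
  wvec W (t + 1) ω - cexp P W t (wvec W (t + 1)) ω

/-- One-step conditional transition probability `P_t^k = e_k^* E[W_{t+1}|F_t]`. -/
noncomputable def Pt (P : FinProb Ω) (W : ℕ → Ω → Fin N) (t : ℕ) (k : Fin N) (ω : Ω) : ℝ :=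
  cexp P W t (fun ω' => wvec W (t + 1) ω' k) ω

/-- The `N × (N-1)` matrix `Ĩ` whose top block is the identity and last row is all `-1`. -/
def Itil (n : ℕ) : Matrix (Fin (n + 1)) (Fin n) ℝ :=
  fun i j => if (i : ℕ) = (j : ℕ) then 1 else if (i : ℕ) = n then -1 else 0

end Setup

section Aux

variable {Ω : Type*} [Fintype Ω] [DecidableEq Ω] {N : ℕ}

lemma samePath_rfl (W : ℕ → Ω → Fin N) (t : ℕ) (ω : Ω) : samePath W t ω ω := fun _ _ => rfl

lemma samePath_symm {W : ℕ → Ω → Fin N} {t : ℕ} {ω ω' : Ω} (h : samePath W t ω ω') :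
    samePath W t ω' ω := fun s hs => (h s hs).symm

lemma samePath_trans {W : ℕ → Ω → Fin N} {t : ℕ} {ω ω' ω'' : Ω} (h : samePath W t ω ω')
    (h' : samePath W t ω' ω'') : samePath W t ω ω'' := fun s hs => (h s hs).trans (h' s hs)

lemma atom_eq {W : ℕ → Ω → Fin N} {t : ℕ} {ω ω' : Ω} (h : samePath W t ω ω') :
    univ.filter (fun ω'' => samePath W t ω ω'') = univ.filter (fun ω'' => samePath W t ω' ω'') := by
  ext ω''
  simp only [mem_filter, mem_univ, true_and]
  exact ⟨fun h2 => samePath_trans (samePath_symm h) h2, fun h2 => samePath_trans h h2⟩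

lemma atomWeight_pos (P : FinProb Ω) (W : ℕ → Ω → Fin N) (t : ℕ) (ω : Ω) :
    0 < ∑ ω' ∈ univ.filter (fun ω' => samePath W t ω ω'), P.p ω' :=
  Finset.sum_pos (fun i _ => P.pos i) ⟨ω, by simp [samePath_rfl]⟩

lemma cexp_congr (P : FinProb Ω) (W : ℕ → Ω → Fin N) (t : ℕ) {E : Type*} [AddCommGroup E]
    [Module ℝ E] {f g : Ω → E} (ω : Ω) (h : ∀ ω', samePath W t ω ω' → f ω' = g ω') :
    cexp P W t f ω = cexp P W t g ω := by
  unfold cexp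
  congr 1
  refine Finset.sum_congr rfl fun ω' hω' => ?_
  rw [h ω' (by simpa using hω')]

lemma cexp_measF (P : FinProb Ω) (W : ℕ → Ω → Fin N) (t : ℕ) {E : Type*} [AddCommGroup E]
    [Module ℝ E] (f : Ω → E) {ω ω' : Ω} (h : samePath W t ω ω') :
    cexp P W t f ω = cexp P W t f ω' := by
  unfold cexp
  rw [atom_eq h]

lemma cexp_comp (P : FinProb Ω) (W : ℕ → Ω → Fin N) (t : ℕ) (g : Fin N → ℝ) (ω : Ω) :
    cexp P W t (fun ω' => g (W (t+1) ω')) ω = ∑ k, Pt P W t k ω * g k := by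
  unfold Pt cexp wvec
  simp only [smul_eq_mul]
  have key : ∑ ω' ∈ univ.filter (fun ω' => samePath W t ω ω'), P.p ω' * g (W (t+1) ω')
      = ∑ k, (∑ ω' ∈ univ.filter (fun ω' => samePath W t ω ω'),
          P.p ω' * (if W (t+1) ω' = k then (1:ℝ) else 0)) * g k := by
    simp only [Finset.sum_mul]
    rw [Finset.sum_comm]
    refine Finset.sum_congr rfl fun ω' _ => ?_
    simp [mul_ite, ite_mul]
  rw [key, Finset.mul_sum]
  refine Finset.sum_congr rfl fun k _ => ?_
  ring

lemma sum_Pt (P : FinProb Ω) (W : ℕ → Ω → Fin N) (t : ℕ) (ω : Ω) :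
    ∑ k, Pt P W t k ω = 1 := by
  have h := cexp_comp P W t (fun _ => (1:ℝ)) ω
  simp only [mul_one] at h
  rw [← h]
  unfold cexp
  simp [smul_eq_mul, ← Finset.mul_sum,
    inv_mul_cancel₀ (ne_of_gt (atomWeight_pos P W t ω))]

lemma tower (P : FinProb Ω) (W : ℕ → Ω → Fin N) (t : ℕ) (f : Ω → ℝ) :
    ∑ ω, P.p ω * f ω = ∑ ω, P.p ω * cexp P W t f ω := by
  classical
  have step1 : ∀ ω : Ω, P.p ω * cexp P W t f ω = ∑ ω' : Ω, (if samePath W t ω ω' then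
      P.p ω * (∑ ω'' ∈ univ.filter (fun ω'' => samePath W t ω ω''), P.p ω'')⁻¹ *
        (P.p ω' * f ω') else 0) := by
    intro ω
    unfold cexp
    simp only [smul_eq_mul]
    rw [Finset.sum_filter (fun ω' => samePath W t ω ω') (fun ω' => P.p ω' * f ω'),
      ← mul_assoc, Finset.mul_sum]
    refine Finset.sum_congr rfl fun ω' _ => ?_
    split <;> simp
  have step3 : ∀ ω' : Ω, (∑ ω : Ω, if samePath W t ω ω' then
      P.p ω * (∑ ω'' ∈ univ.filter (fun ω'' => samePath W t ω ω''), P.p ω'')⁻¹ *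
        (P.p ω' * f ω') else 0) = P.p ω' * f ω' := by
    intro ω'
    rw [← Finset.sum_filter]
    have hcong : ∀ ω ∈ univ.filter (fun ω => samePath W t ω ω'),
        P.p ω * (∑ ω'' ∈ univ.filter (fun ω'' => samePath W t ω ω''), P.p ω'')⁻¹ *
          (P.p ω' * f ω')
        = P.p ω * ((∑ ω'' ∈ univ.filter (fun ω'' => samePath W t ω' ω''), P.p ω'')⁻¹ *
          (P.p ω' * f ω')) := by
      intro ω hω
      rw [atom_eq (by simpa using hω : samePath W t ω ω'), mul_assoc]
    rw [Finset.sum_congr rfl hcong, ← Finset.sum_mul]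
    have hset : univ.filter (fun ω => samePath W t ω ω')
        = univ.filter (fun ω'' => samePath W t ω' ω'') := by
      ext ω
      simp only [mem_filter, mem_univ, true_and]
      exact ⟨fun h => samePath_symm h, fun h => samePath_symm h⟩
    rw [hset, ← mul_assoc, mul_inv_cancel₀ (ne_of_gt (atomWeight_pos P W t ω')), one_mul]
  calc ∑ ω, P.p ω * f ω = ∑ ω', P.p ω' * f ω' := rfl
    _ = ∑ ω', ∑ ω : Ω, (if samePath W t ω ω' then
          P.p ω * (∑ ω'' ∈ univ.filter (fun ω'' => samePath W t ω ω''), P.p ω'')⁻¹ *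
            (P.p ω' * f ω') else 0) := (Finset.sum_congr rfl fun ω' _ => (step3 ω').symm)
    _ = ∑ ω, P.p ω * cexp P W t f ω := by
      rw [Finset.sum_comm]
      exact Finset.sum_congr rfl fun ω _ => (step1 ω).symm

end Aux
section Quad

variable {Ω : Type*} [Fintype Ω] [DecidableEq Ω]

lemma mul_Itil_apply {K n : ℕ} (A : Matrix (Fin K) (Fin (n+1)) ℝ) (i : Fin K) (j : Fin n) :
    (A * Itil n) i j = A i j.castSucc - A i (Fin.last n) := by
  rw [Matrix.mul_apply, Fin.sum_univ_castSucc]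
  have h1 : ∀ k : Fin n, A i k.castSucc * Itil n k.castSucc j
      = if k = j then A i k.castSucc else 0 := by
    intro k
    unfold Itil
    rcases eq_or_ne k j with h|h
    · subst h; simp
    · have hk : (k.castSucc : ℕ) = (k : ℕ) := rfl
      have hkn := k.isLt
      rw [if_neg (by rw [hk]; exact fun hh => h (Fin.ext hh)),
        if_neg (by rw [hk]; omega), mul_zero, if_neg h]
  rw [Finset.sum_congr rfl fun k _ => h1 k,
    Finset.sum_ite_eq' Finset.univ j (fun k => A i k.castSucc)]
  have h2 : Itil n (Fin.last n) j = -1 := by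
    unfold Itil
    have := j.isLt
    rw [if_neg (by simp only [Fin.val_last]; omega), if_pos (Fin.val_last n)]
  rw [h2]
  simp [sub_eq_add_neg]

lemma cexp_quad {n : ℕ} (P : FinProb Ω) (W : ℕ → Ω → Fin (n+1)) (t : ℕ) {K : ℕ}
    (Z : Ω → Matrix (Fin K) (Fin (n+1)) ℝ) (hZ : measF W t Z) (ω : Ω) :
    cexp P W t (fun ω' => ∑ i, ((Z ω').mulVec (Mdiff P W t ω') i)^2) ω
      = ∑ i, ∑ k, Pt P W t k ω * (Z ω i k - ∑ j, Pt P W t j ω * Z ω i j)^2 := by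
  set g : Fin (n+1) → ℝ :=
    fun m => ∑ i, (Z ω i m - ∑ j, Pt P W t j ω * Z ω i j)^2 with hg
  have hstep : ∀ ω', samePath W t ω ω' →
      (∑ i, ((Z ω').mulVec (Mdiff P W t ω') i)^2)
        = g (W (t+1) ω') := by
    intro ω' h
    rw [hg]
    simp only
    have hZω : Z ω' = Z ω := (hZ ω ω' h).symm
    have hcexp : cexp P W t (wvec W (t+1)) ω' = cexp P W t (wvec W (t+1)) ω :=
      (cexp_measF P W t _ h).symm
    have hMd : Mdiff P W t ω' = fun j => wvec W (t+1) ω' j - Pt P W t j ω := by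
      funext j
      unfold Mdiff
      rw [hcexp]
      simp only [Pi.sub_apply]
      congr 1
      unfold Pt cexp
      simp [Finset.sum_apply, Pi.smul_apply, smul_eq_mul]
    refine Finset.sum_congr rfl fun i _ => ?_
    rw [hZω, hMd]
    congr 1
    simp only [Matrix.mulVec, dotProduct]
    have hterm : ∀ j, Z ω i j * (wvec W (t+1) ω' j - Pt P W t j ω)
        = (if W (t+1) ω' = j then Z ω i j else 0) - Pt P W t j ω * Z ω i j := by
      intro j; unfold wvec; split <;> ring
    rw [Finset.sum_congr rfl fun j _ => hterm j, Finset.sum_sub_distrib,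
      Finset.sum_ite_eq Finset.univ (W (t+1) ω') (fun j => Z ω i j)]
    simp
  rw [cexp_congr P W t ω hstep, cexp_comp P W t g ω, hg]
  simp only [Finset.mul_sum]
  rw [Finset.sum_comm]

end Quad

section CoreAlg
lemma core_lower {n : ℕ} (hn : 0 < n) (q : Fin (n+1) → ℝ) (hq : ∀ k, 0 ≤ q k)
    (z : Fin (n+1) → ℝ) (c : ℝ) (hc0 : 0 ≤ c) (hc : ∀ k, c ≤ q k) :
    1 / 2 * (n:ℝ)⁻¹ * c * ∑ j : Fin n, (z j.castSucc - z (Fin.last n)) ^ 2 ≤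
      ∑ k, q k * (z k - ∑ j, q j * z j) ^ 2 := by
  set μ := ∑ j, q j * z j with hμ
  have h1 : c * ∑ k, (z k - μ)^2 ≤ ∑ k, q k * (z k - μ)^2 := by
    rw [Finset.mul_sum]
    exact Finset.sum_le_sum fun k _ => mul_le_mul_of_nonneg_right (hc k) (sq_nonneg _)
  have h2 : ∑ j : Fin n, (z j.castSucc - z (Fin.last n))^2 ≤ 2*(n:ℝ) * ∑ k, (z k - μ)^2 := by
    have hterm : ∀ j : Fin n, (z j.castSucc - z (Fin.last n))^2 ≤
        2*(z j.castSucc - μ)^2 + 2*(z (Fin.last n) - μ)^2 := fun j => by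
      nlinarith [sq_nonneg (z j.castSucc + z (Fin.last n) - 2*μ)]
    have hA : 0 ≤ ∑ j : Fin n, (z j.castSucc - μ)^2 :=
      Finset.sum_nonneg fun j _ => sq_nonneg _
    have hn1 : (1:ℝ) ≤ (n:ℝ) := by exact_mod_cast hn
    calc ∑ j : Fin n, (z j.castSucc - z (Fin.last n))^2
        ≤ ∑ j : Fin n, (2*(z j.castSucc - μ)^2 + 2*(z (Fin.last n) - μ)^2) :=
          Finset.sum_le_sum fun j _ => hterm j
      _ = 2 * (∑ j : Fin n, (z j.castSucc - μ)^2) + 2*(n:ℝ)*(z (Fin.last n) - μ)^2 := by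
          rw [Finset.sum_add_distrib, ← Finset.mul_sum, Finset.sum_const, card_univ,
            Fintype.card_fin, nsmul_eq_mul]; ring
      _ ≤ 2*(n:ℝ) * ((∑ j : Fin n, (z j.castSucc - μ)^2) + (z (Fin.last n) - μ)^2) := by
          nlinarith [sq_nonneg (z (Fin.last n) - μ)]
      _ = 2*(n:ℝ) * ∑ k, (z k - μ)^2 := by rw [Fin.sum_univ_castSucc]
  have hn' : (0:ℝ) < n := by exact_mod_cast hn
  calc 1 / 2 * (n:ℝ)⁻¹ * c * ∑ j : Fin n, (z j.castSucc - z (Fin.last n)) ^ 2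
      ≤ 1 / 2 * (n:ℝ)⁻¹ * c * (2*(n:ℝ) * ∑ k, (z k - μ)^2) := by
        apply mul_le_mul_of_nonneg_left h2 (by positivity)
    _ = c * ∑ k, (z k - μ)^2 := by field_simp
    _ ≤ _ := h1

lemma core_upper {n : ℕ} (hn : 0 < n) (q : Fin (n+1) → ℝ) (hq : ∀ k, 0 < q k)
    (hq1 : ∑ k, q k = 1) (z : Fin (n+1) → ℝ) (c : ℝ)
    (hc : ∀ j : Fin n, (1 - q j.castSucc) * q j.castSucc ≤ c) :
    ∑ k, q k * (z k - ∑ j, q j * z j) ^ 2 ≤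
      (n : ℝ) * c * ∑ j : Fin n, (z j.castSucc - z (Fin.last n)) ^ 2 := by
  have hqle : ∀ k, q k ≤ 1 := by
    intro k
    calc q k ≤ ∑ k', q k' := Finset.single_le_sum (fun i _ => (hq i).le) (mem_univ k)
      _ = 1 := hq1
  set μ := ∑ j, q j * z j with hμ
  set y : Fin (n+1) → ℝ := fun k => z k - z (Fin.last n) with hy
  set ν := ∑ k, q k * y k with hν
  have hνμ : ν = μ - z (Fin.last n) := by
    simp only [hν, hy, mul_sub]
    rw [Finset.sum_sub_distrib, ← Finset.sum_mul, hq1, one_mul]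
  have hvar : ∑ k, q k * (z k - μ)^2 = (∑ k, q k * (y k)^2) - ν^2 := by
    have hzk : ∀ k, q k * (z k - μ)^2 = q k * (y k)^2 - 2*ν*(q k * y k) + ν^2 * q k := by
      intro k
      have h : z k - μ = y k - ν := by rw [hνμ]; simp [hy]
      rw [h]; ring
    rw [Finset.sum_congr rfl (fun k _ => hzk k), Finset.sum_add_distrib,
      Finset.sum_sub_distrib, ← Finset.mul_sum, ← Finset.mul_sum, hq1, ← hν]
    ring
  -- restrict to the first n coordinates
  have hylast : y (Fin.last n) = 0 := by simp [hy]
  have hs1 : ∑ k, q k * (y k)^2 = ∑ j : Fin n, q j.castSucc * (y j.castSucc)^2 := by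
    rw [Fin.sum_univ_castSucc, hylast]; simp
  have hs2 : ν = ∑ j : Fin n, q j.castSucc * y j.castSucc := by
    rw [hν, Fin.sum_univ_castSucc, hylast]; simp
  have hpair : ∀ j l : Fin n, j ≠ l → q j.castSucc * q l.castSucc ≤ c := by
    intro j l hjl
    have hne : j.castSucc ≠ l.castSucc := fun h => hjl (Fin.castSucc_injective n h)
    have hsum2 : q j.castSucc + q l.castSucc ≤ 1 := by
      rw [← hq1]
      have := Finset.sum_le_sum_of_subset_of_nonneg
        (Finset.subset_univ ({j.castSucc, l.castSucc} : Finset (Fin (n+1))))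
        (fun i _ _ => (hq i).le)
      rwa [Finset.sum_pair hne] at this
    calc q j.castSucc * q l.castSucc ≤ q j.castSucc * (1 - q j.castSucc) := by
          nlinarith [hq j.castSucc, hq l.castSucc]
      _ = (1 - q j.castSucc) * q j.castSucc := by ring
      _ ≤ c := hc j
  have hc0 : 0 ≤ c := by
    have j0 : Fin n := ⟨0, hn⟩
    exact le_trans (mul_nonneg (by linarith [hqle j0.castSucc]) (hq j0.castSucc).le) (hc j0)
  have expand : (∑ j : Fin n, q j.castSucc * (y j.castSucc)^2) -
      (∑ j : Fin n, q j.castSucc * y j.castSucc)^2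
      = ∑ j : Fin n, ∑ l : Fin n, ((if l = j then q j.castSucc * (y j.castSucc)^2 else 0)
          - (q j.castSucc * y j.castSucc) * (q l.castSucc * y l.castSucc)) := by
    rw [Finset.sum_congr rfl (fun j (_ : j ∈ (univ : Finset (Fin n))) => Finset.sum_sub_distrib _ _)]
    rw [Finset.sum_sub_distrib]
    congr 1
    · apply Finset.sum_congr rfl
      intro j _
      rw [Finset.sum_ite_eq' univ j (fun _ => q j.castSucc * (y j.castSucc)^2)]
      simp
    · rw [sq, Finset.sum_mul_sum]
  have bound : ∀ j l : Fin n, ((if l = j then q j.castSucc * (y j.castSucc)^2 else 0)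
      - (q j.castSucc * y j.castSucc) * (q l.castSucc * y l.castSucc))
      ≤ c * (|y j.castSucc| * |y l.castSucc|) := by
    intro j l
    rcases eq_or_ne l j with h|h
    · subst h
      rw [if_pos rfl]
      have h2 : |y l.castSucc| * |y l.castSucc| = (y l.castSucc)^2 := by
        rw [abs_mul_abs_self, sq]
      rw [h2]
      nlinarith [mul_le_mul_of_nonneg_right (hc l) (sq_nonneg (y l.castSucc))]
    · rw [if_neg h]
      have h2 : -(y j.castSucc * y l.castSucc) ≤ |y j.castSucc| * |y l.castSucc| := by
        rw [← abs_mul]; exact neg_le_abs _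
      have h3 : 0 ≤ q j.castSucc * q l.castSucc := mul_nonneg (hq _).le (hq _).le
      have h4 := hpair j l (fun hh => h hh.symm)
      have h5 : 0 ≤ |y j.castSucc| * |y l.castSucc| := mul_nonneg (abs_nonneg _) (abs_nonneg _)
      calc 0 - (q j.castSucc * y j.castSucc) * (q l.castSucc * y l.castSucc)
          = (q j.castSucc * q l.castSucc) * (-(y j.castSucc * y l.castSucc)) := by ring
        _ ≤ (q j.castSucc * q l.castSucc) * (|y j.castSucc| * |y l.castSucc|) :=
            mul_le_mul_of_nonneg_left h2 h3
        _ ≤ c * (|y j.castSucc| * |y l.castSucc|) := mul_le_mul_of_nonneg_right h4 h5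
  have dbl : ∑ j : Fin n, ∑ l : Fin n, ((if l = j then q j.castSucc * (y j.castSucc)^2 else 0)
      - (q j.castSucc * y j.castSucc) * (q l.castSucc * y l.castSucc))
      ≤ c * ((n:ℝ) * ∑ j : Fin n, (y j.castSucc)^2) := by
    calc ∑ j : Fin n, ∑ l : Fin n, ((if l = j then q j.castSucc * (y j.castSucc)^2 else 0)
        - (q j.castSucc * y j.castSucc) * (q l.castSucc * y l.castSucc))
        ≤ ∑ j : Fin n, ∑ l : Fin n, c * (|y j.castSucc| * |y l.castSucc|) :=
          Finset.sum_le_sum fun j _ => Finset.sum_le_sum fun l _ => bound j l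
      _ = c * (∑ j : Fin n, |y j.castSucc|)^2 := by
          rw [sq, Finset.sum_mul_sum, Finset.mul_sum]
          exact Finset.sum_congr rfl fun j _ => by rw [Finset.mul_sum]
      _ ≤ c * ((n:ℝ) * ∑ j : Fin n, (y j.castSucc)^2) := by
          apply mul_le_mul_of_nonneg_left _ hc0
          have := sq_sum_le_card_mul_sum_sq (s := (univ : Finset (Fin n)))
            (f := fun j => |y j.castSucc|)
          simpa [sq_abs] using this
  calc ∑ k, q k * (z k - μ)^2
      = (∑ j : Fin n, q j.castSucc * (y j.castSucc)^2)
        - (∑ j : Fin n, q j.castSucc * y j.castSucc)^2 := by rw [hvar, hs1, hs2]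
    _ ≤ c * ((n:ℝ) * ∑ j : Fin n, (y j.castSucc)^2) := by rw [expand]; exact dbl
    _ = (n:ℝ) * c * ∑ j : Fin n, (z j.castSucc - z (Fin.last n))^2 := by
        simp only [hy]; ring
end CoreAlg

/-- two-sided norm equivalence with the constants `L̄` and `L`. -/
theorem stmt4 {Ω : Type*} [Fintype Ω] [DecidableEq Ω] {n K : ℕ}
    (P : FinProb Ω) (W : ℕ → Ω → Fin (n + 1)) (T : ℕ)
    (hpos : ∀ t < T, ∀ k ω, 0 < Pt P W t k ω)
    (s : Finset (ℕ × Fin n × Ω))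
    (hs : s = (Finset.range T) ×ˢ (Finset.univ : Finset (Fin n × Ω)))
    (hne : s.Nonempty)
    (s2 : Finset (ℕ × Fin (n + 1) × Ω))
    (hs2 : s2 = (Finset.range T) ×ˢ (Finset.univ : Finset (Fin (n + 1) × Ω)))
    (hne2 : s2.Nonempty)
    (Lbar Lund : ℝ)
    (hLbar : Lbar = (n : ℝ) *
      s.sup' hne (fun x => (1 - Pt P W x.1 x.2.1.castSucc x.2.2) * Pt P W x.1 x.2.1.castSucc x.2.2))
    (hLund : Lund = (1 / 2) * (n : ℝ)⁻¹ * s2.inf' hne2 (fun x => Pt P W x.1 x.2.1 x.2.2)) :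
    ∀ t < T, ∀ Z : Ω → Matrix (Fin K) (Fin (n + 1)) ℝ, measF W t Z →
      Lund * (∑ ω, P.p ω * ∑ i, ∑ j, ((Z ω * Itil n) i j) ^ 2) ≤
          (∑ ω, P.p ω * ∑ i, ((Z ω).mulVec (Mdiff P W t ω) i) ^ 2) ∧
        (∑ ω, P.p ω * ∑ i, ((Z ω).mulVec (Mdiff P W t ω) i) ^ 2) ≤
          Lbar * (∑ ω, P.p ω * ∑ i, ∑ j, ((Z ω * Itil n) i j) ^ 2) := by

  intro t ht Z hZ
  have hn : 0 < n := hne.choose.2.1.pos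
  rw [hLbar, hLund]
  set c := s2.inf' hne2 (fun x => Pt P W x.1 x.2.1 x.2.2) with hcdef
  set C := s.sup' hne
      (fun x => (1 - Pt P W x.1 x.2.1.castSucc x.2.2) * Pt P W x.1 x.2.1.castSucc x.2.2)
    with hCdef
  have hc0 : 0 ≤ c := by
    apply Finset.le_inf'
    intro b hb
    rw [hs2, Finset.mem_product, Finset.mem_range] at hb
    exact (hpos b.1 hb.1 b.2.1 b.2.2).le
  have hcle : ∀ (k : Fin (n+1)) (ω : Ω), c ≤ Pt P W t k ω := by
    intro k ω
    have hmem : ((t, k, ω) : ℕ × Fin (n+1) × Ω) ∈ s2 := by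
      rw [hs2]
      exact Finset.mem_product.mpr ⟨Finset.mem_range.mpr ht, Finset.mem_univ _⟩
    have h := Finset.inf'_le (fun x : ℕ × Fin (n+1) × Ω => Pt P W x.1 x.2.1 x.2.2) hmem
    simpa only using h
  have hCge : ∀ (j : Fin n) (ω : Ω),
      (1 - Pt P W t j.castSucc ω) * Pt P W t j.castSucc ω ≤ C := by
    intro j ω
    have hmem : ((t, j, ω) : ℕ × Fin n × Ω) ∈ s := by
      rw [hs]
      exact Finset.mem_product.mpr ⟨Finset.mem_range.mpr ht, Finset.mem_univ _⟩
    have h := Finset.le_sup' (fun x : ℕ × Fin n × Ω => (1 - Pt P W x.1 x.2.1.castSucc x.2.2) *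
      Pt P W x.1 x.2.1.castSucc x.2.2) hmem
    simpa only using h
  have hrw : (∑ ω, P.p ω * ∑ i, ((Z ω).mulVec (Mdiff P W t ω) i) ^ 2)
      = ∑ ω, P.p ω * ∑ i, ∑ k,
          Pt P W t k ω * (Z ω i k - ∑ j, Pt P W t j ω * Z ω i j)^2 := by
    rw [tower P W t]
    exact Finset.sum_congr rfl fun ω _ => by rw [cexp_quad P W t Z hZ ω]
  have hItil : ∀ ω, (∑ i, ∑ j, ((Z ω * Itil n) i j) ^ 2)
      = ∑ i, ∑ j : Fin n, (Z ω i j.castSucc - Z ω i (Fin.last n))^2 := fun ω =>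
    Finset.sum_congr rfl fun i _ => Finset.sum_congr rfl fun j _ => by rw [mul_Itil_apply]
  rw [hrw]
  constructor
  · -- lower bound
    rw [Finset.mul_sum]
    apply Finset.sum_le_sum
    intro ω _
    rw [hItil ω]
    have hre : 1 / 2 * (n:ℝ)⁻¹ * c *
        (P.p ω * ∑ i, ∑ j : Fin n, (Z ω i j.castSucc - Z ω i (Fin.last n))^2)
        = P.p ω * ∑ i, 1 / 2 * (n:ℝ)⁻¹ * c *
            ∑ j : Fin n, (Z ω i j.castSucc - Z ω i (Fin.last n))^2 := by
      rw [← Finset.mul_sum]; ring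
    rw [hre]
    apply mul_le_mul_of_nonneg_left _ (P.pos ω).le
    apply Finset.sum_le_sum
    intro i _
    exact core_lower hn (fun k => Pt P W t k ω) (fun k => (hpos t ht k ω).le)
      (fun k => Z ω i k) c hc0 (fun k => hcle k ω)
  · -- upper bound
    rw [Finset.mul_sum]
    apply Finset.sum_le_sum
    intro ω _
    rw [hItil ω]
    have hre : (n:ℝ) * C *
        (P.p ω * ∑ i, ∑ j : Fin n, (Z ω i j.castSucc - Z ω i (Fin.last n))^2)
        = P.p ω * ∑ i, (n:ℝ) * C *
            ∑ j : Fin n, (Z ω i j.castSucc - Z ω i (Fin.last n))^2 := by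
      rw [← Finset.mul_sum]; ring
    rw [hre]
    apply mul_le_mul_of_nonneg_left _ (P.pos ω).le
    apply Finset.sum_le_sum
    intro i _
    exact core_upper hn (fun k => Pt P W t k ω) (fun k => hpos t ht k ω)
      (sum_Pt P W t ω) (fun k => Z ω i k) C (fun j => hCge j ω)
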